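/- Let X and Y be Banach spaces such that X has type p, with 1 ≤ p ≤ 2, and let u : X → Y be a continuous linear operator whose adjoint u* is almost p*-summing. Then u is Cohen strongly p-summing. -/

import Mathlib

open MeasureTheory Finset Filter
open scoped ENNReal NNReal

noncomputable section

universe u v

/-- The `i`-th Rademacher function. -/
def rademacher (i : ℕ) (t : ℝ) : ℝ :=
  if Int.fract ((2 : ℝ) ^ i * t) < 1 / 2 then 1 else -1

/-- The Rademacher (`Rad`) norm of the first `m` terms of a sequence:
`(∫_0^1 ‖∑_{i<m} r_i(t) x_i‖² dt)^{1/2}`. -/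
def radNorm {Z : Type u} [NormedAddCommGroup Z] [NormedSpace ℝ Z] (m : ℕ) (x : ℕ → Z) : ℝ :=
  (∫ t in (0:ℝ)..1, ‖∑ i ∈ Finset.range m, rademacher i t • x i‖ ^ 2) ^ ((1:ℝ) / 2)

/-- Conjugate exponent in `ℝ≥0∞` (`conjExp p = p*`, `1/p + 1/p* = 1`). -/
def conjExp (p : ℝ≥0∞) : ℝ≥0∞ := (1 - p⁻¹)⁻¹

/-- Finite strong `ℓ_q` norm `‖(x_i)_{i<m}‖_q` (sup norm if `q = ∞`). -/
def lpNormFin {Z : Type u} [NormedAddCommGroup Z] (q : ℝ≥0∞) (m : ℕ) (x : ℕ → Z) : ℝ :=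
  if q = ∞ then ⨆ i : Fin m, ‖x (i : ℕ)‖
  else (∑ i ∈ Finset.range m, ‖x i‖ ^ q.toReal) ^ (1 / q.toReal)

/-- Finite weak `ℓ_q` norm `‖(x_i)_{i<m}‖_{w,q}`. -/
def weakNorm {Z : Type u} [NormedAddCommGroup Z] [NormedSpace ℝ Z] (q : ℝ≥0∞) (m : ℕ)
    (x : ℕ → Z) : ℝ :=
  if q = ∞ then ⨆ i : Fin m, ‖x (i : ℕ)‖
  else ⨆ φ : {φ : Z →L[ℝ] ℝ // ‖φ‖ ≤ 1},
    (∑ i ∈ Finset.range m, |φ.1 (x i)| ^ q.toReal) ^ (1 / q.toReal)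

/-- Membership in `Rad(Z)`: almost unconditionally summable sequences. -/
def MemRad {Z : Type u} [NormedAddCommGroup Z] [NormedSpace ℝ Z] (x : ℕ → Z) : Prop :=
  ∃ C, ∀ m, radNorm m x ≤ C

/-- Weakly `q`-summable sequences `ℓ_q^w(Z)`. -/
def MemWeakLp {Z : Type u} [NormedAddCommGroup Z] [NormedSpace ℝ Z] (q : ℝ≥0∞)
    (x : ℕ → Z) : Prop :=
  ∃ C, ∀ m, weakNorm q m x ≤ C

/-- Absolutely `p`-summable sequences `ℓ_p(Z)` (bounded sequences if `p = ∞`). -/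
def MemStrongLp {Z : Type u} [NormedAddCommGroup Z] (p : ℝ≥0∞) (x : ℕ → Z) : Prop :=
  if p = ∞ then ∃ C, ∀ i, ‖x i‖ ≤ C else Summable fun i => ‖x i‖ ^ p.toReal

/-- Cohen strongly `p`-summable sequences `ℓ_p⟨Z⟩`. -/
def MemCohen {Z : Type u} [NormedAddCommGroup Z] [NormedSpace ℝ Z] (p : ℝ≥0∞)
    (y : ℕ → Z) : Prop :=
  ∀ φ : ℕ → (Z →L[ℝ] ℝ), MemWeakLp (conjExp p) φ → Summable fun i => |φ i (y i)|

/-- Almost `p`-summing operators. -/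
def IsAlmostPSumming {Z : Type u} {W : Type v} [NormedAddCommGroup Z] [NormedSpace ℝ Z]
    [NormedAddCommGroup W] [NormedSpace ℝ W] (p : ℝ≥0∞) (u : Z →L[ℝ] W) : Prop :=
  ∃ C, 0 ≤ C ∧ ∀ m (x : ℕ → Z), radNorm m (fun i => u (x i)) ≤ C * weakNorm p m x

/-- The almost `p`-summing norm `π_{al.s.p}(u)`. -/
def almostNorm {Z : Type u} {W : Type v} [NormedAddCommGroup Z] [NormedSpace ℝ Z]
    [NormedAddCommGroup W] [NormedSpace ℝ W] (p : ℝ≥0∞) (u : Z →L[ℝ] W) : ℝ :=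
  sInf {C | 0 ≤ C ∧ ∀ m (x : ℕ → Z), radNorm m (fun i => u (x i)) ≤ C * weakNorm p m x}

/-- Absolutely `p`-summing operators (every operator is `∞`-summing by convention). -/
def IsPSumming {Z : Type u} {W : Type v} [NormedAddCommGroup Z] [NormedSpace ℝ Z]
    [NormedAddCommGroup W] [NormedSpace ℝ W] (p : ℝ≥0∞) (u : Z →L[ℝ] W) : Prop :=
  if p = ∞ then True
  else ∀ x : ℕ → Z, MemWeakLp p x → Summable fun i => ‖u (x i)‖ ^ p.toReal

/-- Cohen strongly `q`-summing with constant `C`. -/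
def IsCohenStrongWith {Z : Type u} {W : Type v} [NormedAddCommGroup Z] [NormedSpace ℝ Z]
    [NormedAddCommGroup W] [NormedSpace ℝ W] (q : ℝ≥0∞) (C : ℝ) (u : Z →L[ℝ] W) : Prop :=
  ∀ m (x : ℕ → Z) (φ : ℕ → (W →L[ℝ] ℝ)),
    ∑ i ∈ Finset.range m, |φ i (u (x i))| ≤ C * lpNormFin q m x * weakNorm (conjExp q) m φ

/-- Cohen strongly `q`-summing operators. -/
def IsCohenStrong {Z : Type u} {W : Type v} [NormedAddCommGroup Z] [NormedSpace ℝ Z]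
    [NormedAddCommGroup W] [NormedSpace ℝ W] (q : ℝ≥0∞) (u : Z →L[ℝ] W) : Prop :=
  ∃ C, 0 ≤ C ∧ IsCohenStrongWith q C u

/-- The Banach space adjoint `u* : W* → Z*`. -/
def adj {Z : Type u} {W : Type v} [NormedAddCommGroup Z] [NormedSpace ℝ Z]
    [NormedAddCommGroup W] [NormedSpace ℝ W] (u : Z →L[ℝ] W) :
    (W →L[ℝ] ℝ) →L[ℝ] (Z →L[ℝ] ℝ) :=
  (ContinuousLinearMap.compSL Z W ℝ (RingHom.id ℝ) (RingHom.id ℝ)).flip u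

/-- `Z` has type `p` with constant `C`. -/
def HasTypeWith (p : ℝ≥0∞) (C : ℝ) (Z : Type u) [NormedAddCommGroup Z] [NormedSpace ℝ Z] :
    Prop :=
  ∀ m (x : ℕ → Z), radNorm m x ≤ C * lpNormFin p m x

/-- `Z` has type `p`. -/
def HasTypeP (p : ℝ≥0∞) (Z : Type u) [NormedAddCommGroup Z] [NormedSpace ℝ Z] : Prop :=
  ∃ C, 0 ≤ C ∧ HasTypeWith p C Z

/-- The type-`p` constant `T_p(Z)`. -/
def typeConst (p : ℝ≥0∞) (Z : Type u) [NormedAddCommGroup Z] [NormedSpace ℝ Z] : ℝ :=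
  sInf {C | 0 ≤ C ∧ HasTypeWith p C Z}

/-- `Z` is an `L_p`-space with constant `lam`. -/
def IsLpSpaceWith (p : ℝ≥0∞) [Fact (1 ≤ p)] (lam : ℝ) (Z : Type u) [NormedAddCommGroup Z]
    [NormedSpace ℝ Z] : Prop :=
  ∀ E : Submodule ℝ Z, FiniteDimensional ℝ E →
    ∃ F : Submodule ℝ Z, E ≤ F ∧ FiniteDimensional ℝ F ∧
      ∃ v : F ≃L[ℝ] PiLp p (fun _ : Fin (Module.finrank ℝ F) => ℝ),
        ‖(v : F →L[ℝ] PiLp p (fun _ : Fin (Module.finrank ℝ F) => ℝ))‖ *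
          ‖(v.symm : PiLp p (fun _ : Fin (Module.finrank ℝ F) => ℝ) →L[ℝ] F)‖ ≤ lam

/-- `Z` is an `L_p`-space. -/
def IsLpSpace (p : ℝ≥0∞) [Fact (1 ≤ p)] (Z : Type u) [NormedAddCommGroup Z]
    [NormedSpace ℝ Z] : Prop :=
  ∃ lam : ℝ, 1 < lam ∧ IsLpSpaceWith p lam Z

/-- `Z` is isomorphic to a Hilbert space. -/
def IsomorphicToHilbert (Z : Type u) [NormedAddCommGroup Z] [NormedSpace ℝ Z] : Prop :=
  ∃ ι : Type u, Nonempty (Z ≃L[ℝ] lp (fun _ : ι => ℝ) 2)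

/-- `Z` is isomorphic to a closed subspace of some `L_r(μ)`. -/
def IsomorphicToClosedSubspaceLp (r : ℝ≥0∞) [Fact (1 ≤ r)] (Z : Type u)
    [NormedAddCommGroup Z] [NormedSpace ℝ Z] : Prop :=
  ∃ (Ω : Type) (mΩ : MeasurableSpace Ω) (μ : @MeasureTheory.Measure Ω mΩ)
    (S : Submodule ℝ (@MeasureTheory.Lp Ω ℝ mΩ _ r μ)),
    IsClosed (S : Set (@MeasureTheory.Lp Ω ℝ mΩ _ r μ)) ∧ Nonempty (Z ≃L[ℝ] S)


lemma fract_lt_half_iff (s : ℝ) : Int.fract s < 1 / 2 ↔ Even ⌊2 * s⌋ := by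
  have h1 : (2:ℝ) * s = 2 * Int.fract s + (2 * ⌊s⌋ : ℤ) := by
    push_cast
    have := Int.fract_add_floor s
    nlinarith [Int.fract_add_floor s]
  have h2 : ⌊2 * s⌋ = ⌊2 * Int.fract s⌋ + 2 * ⌊s⌋ := by
    rw [h1, Int.floor_add_intCast]
  rcases lt_or_ge (Int.fract s) (1/2) with h | h
  · have : ⌊2 * Int.fract s⌋ = 0 := by
      rw [Int.floor_eq_zero_iff]
      constructor
      · linarith [Int.fract_nonneg s]
      · linarith
    simp only [h2, this, zero_add]
    exact ⟨fun _ => even_two_mul ⌊s⌋, fun _ => h⟩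
  · have : ⌊2 * Int.fract s⌋ = 1 := by
      rw [Int.floor_eq_iff]
      constructor
      · push_cast; linarith
      · push_cast; linarith [Int.fract_lt_one s]
    simp only [h2, this]
    constructor
    · intro hc; linarith
    · intro hc; exfalso
      rcases Int.even_add.mp hc with h'
      simp [Int.even_mul] at h'

lemma rademacher_eq_of_floor {i : ℕ} {n : ℤ} {t : ℝ} (h1 : (n:ℝ) ≤ 2^(i+1) * t)
    (h2 : 2^(i+1) * t < n + 1) : rademacher i t = if Even n then 1 else -1 := by
  unfold rademacher
  have hf : ⌊(2:ℝ) * (2^i * t)⌋ = n := by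
    rw [Int.floor_eq_iff]
    constructor
    · calc (n:ℝ) ≤ 2^(i+1) * t := h1
        _ = 2 * (2^i * t) := by ring
    · calc (2:ℝ) * (2^i * t) = 2^(i+1)*t := by ring
        _ < n + 1 := h2
  simp only [fract_lt_half_iff, hf]

lemma rademacher_const_on {i j k : ℕ} (hij : i < j) {t : ℝ}
    (h1 : (k:ℝ)/2^j ≤ t) (h2 : t < ((k:ℝ)+1)/2^j) :
    rademacher i t = if Even (k / 2^(j-i-1)) then 1 else -1 := by
  set M : ℕ := 2^(j-i-1) with hM
  set n : ℕ := k / M with hn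
  have hMpos : (0:ℝ) < M := by positivity
  have hpow : (2:ℝ)^j = 2^(i+1) * M := by
    rw [hM]
    push_cast
    rw [← pow_add]
    congr 1
    omega
  have hx1 : ((n:ℤ):ℝ) ≤ 2^(i+1) * t := by
    have hk : (n:ℝ) * M ≤ k := by exact_mod_cast Nat.div_mul_le_self k M
    have := mul_le_mul_of_nonneg_left h1 (le_of_lt (by positivity : (0:ℝ) < 2^(i+1)))
    push_cast
    rw [hpow] at this
    calc (n:ℝ) ≤ (k:ℝ)/M := by rw [le_div_iff₀ hMpos]; exact hk
      _ = 2^(i+1) * ((k:ℝ)/(2^(i+1) * M)) := by field_simp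
      _ ≤ 2^(i+1) * t := this
  have hx2 : 2^(i+1) * t < ((n:ℤ):ℝ) + 1 := by
    have hk : (k:ℝ) + 1 ≤ ((n:ℝ)+1) * M := by
      have : k + 1 ≤ (n+1) * M := by
        have e1 := Nat.div_add_mod k M
        have e2 : k % M < M := Nat.mod_lt _ (by positivity)
        calc k + 1 = M * n + k % M + 1 := by rw [hn, e1]
          _ ≤ M * n + M := by omega
          _ = (n+1) * M := by ring
      exact_mod_cast this
    have h2' : 2^(i+1) * t < 2^(i+1) * (((k:ℝ)+1)/2^j) := by
      apply mul_lt_mul_of_pos_left h2 (by positivity)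
    calc 2^(i+1) * t < 2^(i+1) * (((k:ℝ)+1)/2^j) := h2'
      _ = ((k:ℝ)+1)/M := by rw [hpow]; field_simp
      _ ≤ (n:ℝ) + 1 := by rw [div_le_iff₀ hMpos]; linarith
  have := rademacher_eq_of_floor hx1 hx2
  rw [this]
  norm_num [Int.even_coe_nat]

lemma abs_rademacher (i : ℕ) (t : ℝ) : |rademacher i t| = 1 := by
  unfold rademacher; split <;> simp

lemma measurable_rademacher (i : ℕ) : Measurable (rademacher i) := by
  unfold rademacher
  exact Measurable.ite (measurableSet_lt ((measurable_const_mul _).fract)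
    measurable_const) measurable_const measurable_const

lemma intervalIntegrable_of_bounded {f : ℝ → ℝ} {B : ℝ} (hf : Measurable f)
    (hb : ∀ t, |f t| ≤ B) (a b : ℝ) : IntervalIntegrable f volume a b := by
  refine IntervalIntegrable.mono_fun' (g := fun _ => B) intervalIntegrable_const
    hf.aestronglyMeasurable (Eventually.of_forall ?_)
  intro t; simpa using hb t

lemma ae_ne_point (c : ℝ) : ∀ᵐ (x:ℝ), x ≠ c := by
  rw [ae_iff]
  have : {a : ℝ | ¬ a ≠ c} = {c} := by ext x; simp
  rw [this]
  exact Real.volume_singleton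

lemma integral_rademacher_sub (j k : ℕ) :
    ∫ t in ((k:ℝ)/2^j)..(((k:ℝ)+1)/2^j), rademacher j t = 0 := by
  set c : ℝ := (k:ℝ)/2^j with hc
  set mid : ℝ := (2*(k:ℝ)+1)/2^(j+1) with hmid
  set d : ℝ := ((k:ℝ)+1)/2^j with hd
  have h2j : (0:ℝ) < 2^j := by positivity
  have h2j1 : (0:ℝ) < 2^(j+1) := by positivity
  have hcm : c ≤ mid := by rw [hc, hmid, div_le_div_iff₀ h2j h2j1]; ring_nf; nlinarith
  have hmd : mid ≤ d := by rw [hd, hmid, div_le_div_iff₀ h2j1 h2j]; ring_nf; nlinarith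
  have h1 : ∫ t in c..mid, rademacher j t = mid - c := by
    rw [show mid - c = ∫ t in c..mid, (1:ℝ) by simp]
    apply intervalIntegral.integral_congr_ae
    filter_upwards [ae_ne_point mid] with x hx hmem
    rw [Set.uIoc_of_le hcm] at hmem
    have hx1 : c < x := hmem.1
    have hx2 : x < mid := lt_of_le_of_ne hmem.2 hx
    have := rademacher_eq_of_floor (i := j) (n := 2*k) (t := x) ?_ ?_
    · rw [this]; simp
    · push_cast
      calc (2:ℝ)*k = 2^(j+1) * c := by rw [hc]; field_simp; ring
        _ ≤ 2^(j+1) * x := by nlinarith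
    · push_cast
      calc (2:ℝ)^(j+1) * x < 2^(j+1) * mid := by nlinarith
        _ = 2*k+1 := by rw [hmid]; field_simp
  have h2 : ∫ t in mid..d, rademacher j t = -(d - mid) := by
    rw [show -(d - mid) = ∫ t in mid..d, (-1:ℝ) by simp]
    apply intervalIntegral.integral_congr_ae
    filter_upwards [ae_ne_point d] with x hx hmem
    rw [Set.uIoc_of_le hmd] at hmem
    have hx1 : mid < x := hmem.1
    have hx2 : x < d := lt_of_le_of_ne hmem.2 hx
    have := rademacher_eq_of_floor (i := j) (n := 2*k+1) (t := x) ?_ ?_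
    · rw [this]
      have : ¬ Even (2*(k:ℤ)+1) := by simp [Int.even_add_one, parity_simps]
      simp [this]
    · push_cast
      calc (2:ℝ)*k+1 = 2^(j+1) * mid := by rw [hmid]; field_simp
        _ ≤ 2^(j+1) * x := by nlinarith
    · push_cast
      calc (2:ℝ)^(j+1) * x < 2^(j+1) * d := by nlinarith
        _ = 2*k+1+1 := by rw [hd]; field_simp; ring
  have hint1 : IntervalIntegrable (rademacher j) volume c mid :=
    intervalIntegrable_of_bounded (measurable_rademacher j)
      (fun t => le_of_eq (abs_rademacher j t)) _ _
  have hint2 : IntervalIntegrable (rademacher j) volume mid d :=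
    intervalIntegrable_of_bounded (measurable_rademacher j)
      (fun t => le_of_eq (abs_rademacher j t)) _ _
  have := intervalIntegral.integral_add_adjacent_intervals hint1 hint2
  rw [← this, h1, h2]
  have : mid - c = d - mid := by
    rw [hc, hmid, hd]; field_simp; ring
  linarith

lemma rademacher_intervalIntegrable (i : ℕ) (a b : ℝ) :
    IntervalIntegrable (rademacher i) volume a b :=
  intervalIntegrable_of_bounded (measurable_rademacher i)
    (fun t => le_of_eq (abs_rademacher i t)) a b

lemma rademacher_mul_intervalIntegrable (i j : ℕ) (a b : ℝ) :
    IntervalIntegrable (fun t => rademacher i t * rademacher j t) volume a b := by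
  apply intervalIntegrable_of_bounded (B := 1)
    ((measurable_rademacher i).mul (measurable_rademacher j))
  intro t
  rw [Pi.mul_apply, abs_mul, abs_rademacher, abs_rademacher, one_mul]

lemma integral_rademacher_mul_of_lt {i j : ℕ} (hij : i < j) :
    ∫ t in (0:ℝ)..1, rademacher i t * rademacher j t = 0 := by
  set a : ℕ → ℝ := fun k => (k:ℝ)/2^j with ha
  have h2j : (0:ℝ) < 2^j := by positivity
  have key : ∀ k : ℕ, ∫ t in a k..a (k+1), rademacher i t * rademacher j t = 0 := by
    intro k
    have hlt : a k < a (k+1) := by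
      rw [ha]; push_cast
      apply div_lt_div_of_pos_right ?_ h2j
      linarith
    have hconst : ∀ x ∈ Set.Ico (a k) (a (k+1)), rademacher i x =
        (if Even (k / 2^(j-i-1)) then 1 else -1) := by
      intro x hx
      apply rademacher_const_on hij
      · exact hx.1
      · rw [ha] at hx; push_cast at hx; exact hx.2
    have hcong : ∫ t in a k..a (k+1), rademacher i t * rademacher j t
        = ∫ t in a k..a (k+1), (if Even (k / 2^(j-i-1)) then (1:ℝ) else -1) * rademacher j t := by
      apply intervalIntegral.integral_congr_ae
      filter_upwards [ae_ne_point (a (k+1))] with x hx hmem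
      rw [Set.uIoc_of_le (le_of_lt hlt)] at hmem
      rw [hconst x ⟨le_of_lt hmem.1, lt_of_le_of_ne hmem.2 hx⟩]
    rw [hcong, intervalIntegral.integral_const_mul]
    have : ∫ t in a k..a (k+1), rademacher j t = 0 := by
      have := integral_rademacher_sub j k
      rw [ha]; push_cast
      convert this using 2
    rw [this, mul_zero]
  have hadj := intervalIntegral.sum_integral_adjacent_intervals
    (f := fun t => rademacher i t * rademacher j t) (μ := volume) (a := a) (n := 2^j)
    (fun k _ => rademacher_mul_intervalIntegrable i j _ _)
  rw [Finset.sum_congr rfl (fun k _ => key k)] at hadj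
  simp only [Finset.sum_const_zero] at hadj
  have ha0 : a 0 = 0 := by simp [ha]
  have ha1 : a (2^j) = 1 := by rw [ha]; field_simp; norm_num
  rw [ha0, ha1] at hadj
  exact hadj.symm

lemma integral_rademacher_mul (i j : ℕ) :
    ∫ t in (0:ℝ)..1, rademacher i t * rademacher j t = if i = j then 1 else 0 := by
  rcases lt_trichotomy i j with h | h | h
  · rw [integral_rademacher_mul_of_lt h, if_neg (ne_of_lt h)]
  · subst h
    rw [if_pos rfl]
    have : ∀ t, rademacher i t * rademacher i t = 1 := by
      intro t
      have := abs_rademacher i t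
      nlinarith [abs_nonneg (rademacher i t), sq_abs (rademacher i t)]
    rw [intervalIntegral.integral_congr (g := fun _ => (1:ℝ)) (fun t _ => this t)]
    simp
  · rw [if_neg (ne_of_gt h)]
    have : ∀ t, rademacher i t * rademacher j t = rademacher j t * rademacher i t :=
      fun t => mul_comm _ _
    rw [intervalIntegral.integral_congr (fun t _ => this t)]
    exact integral_rademacher_mul_of_lt h

variable {X : Type u} [NormedAddCommGroup X] [NormedSpace ℝ X]

lemma measurable_norm_rad_sum (m : ℕ) (x : ℕ → X) :
    Measurable fun t => ‖∑ i ∈ Finset.range m, rademacher i t • x i‖ := by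
  have hc : Continuous fun a : ℕ → ℝ => ‖∑ i ∈ Finset.range m, a i • x i‖ :=
    (continuous_finset_sum _ fun i _ => (continuous_apply i).smul continuous_const).norm
  have hm : Measurable fun t => (fun i => rademacher i t : ℕ → ℝ) :=
    measurable_pi_lambda _ fun i => measurable_rademacher i
  exact hc.measurable.comp hm

lemma norm_rad_sum_le (m : ℕ) (x : ℕ → X) (t : ℝ) :
    ‖∑ i ∈ Finset.range m, rademacher i t • x i‖ ≤ ∑ i ∈ Finset.range m, ‖x i‖ := by
  refine (norm_sum_le _ _).trans ?_
  apply Finset.sum_le_sum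
  intro i _
  rw [norm_smul, Real.norm_eq_abs, abs_rademacher, one_mul]

set_option maxHeartbeats 1000000 in
lemma pairing_integral (m : ℕ) (ψ : ℕ → X →L[ℝ] ℝ) (z : ℕ → X) :
    (∫ t in (0:ℝ)..1,
      (∑ i ∈ Finset.range m, rademacher i t • ψ i) (∑ j ∈ Finset.range m, rademacher j t • z j))
      = ∑ i ∈ Finset.range m, ψ i (z i) := by
  have expand : ∀ t : ℝ,
      (∑ i ∈ Finset.range m, rademacher i t • ψ i) (∑ j ∈ Finset.range m, rademacher j t • z j)
      = ∑ i ∈ Finset.range m, ∑ j ∈ Finset.range m,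
          (rademacher i t * rademacher j t) * (ψ i) (z j) := by
    intro t
    rw [ContinuousLinearMap.sum_apply]
    refine Finset.sum_congr rfl fun i _ => ?_
    rw [ContinuousLinearMap.smul_apply, map_sum]
    rw [Finset.smul_sum]
    refine Finset.sum_congr rfl fun j _ => ?_
    rw [_root_.map_smul]
    simp only [smul_eq_mul]
    ring
  have hintj : ∀ i, ∀ j ∈ Finset.range m, IntervalIntegrable
      (fun t => (rademacher i t * rademacher j t) * (ψ i) (z j)) volume 0 1 :=
    fun i j _ => (rademacher_mul_intervalIntegrable i j 0 1).mul_const _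
  have h1 : (∫ t in (0:ℝ)..1,
      (∑ i ∈ Finset.range m, rademacher i t • ψ i) (∑ j ∈ Finset.range m, rademacher j t • z j))
      = ∫ t in (0:ℝ)..1, ∑ i ∈ Finset.range m, ∑ j ∈ Finset.range m,
          (rademacher i t * rademacher j t) * (ψ i) (z j) := by
    apply intervalIntegral.integral_congr
    intro t _
    exact expand t
  have hint2 : ∀ i ∈ Finset.range m, IntervalIntegrable
      (fun t => ∑ j ∈ Finset.range m, (rademacher i t * rademacher j t) * (ψ i) (z j))
      volume 0 1 := by
    intro i _
    have := IntervalIntegrable.sum (Finset.range m) (hintj i)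
    rwa [Finset.sum_fn] at this
  rw [h1, intervalIntegral.integral_finset_sum hint2]
  refine Finset.sum_congr rfl fun i hi => ?_
  rw [intervalIntegral.integral_finset_sum (hintj i)]
  have step : ∀ j ∈ Finset.range m,
      (∫ t in (0:ℝ)..1, (rademacher i t * rademacher j t) * (ψ i) (z j))
      = if i = j then (ψ i) (z j) else 0 := by
    intro j _
    rw [intervalIntegral.integral_mul_const, integral_rademacher_mul]
    split <;> simp
  rw [Finset.sum_congr rfl step]
  simp [Finset.sum_ite_eq, hi]

lemma radNorm_nonneg (m : ℕ) (x : ℕ → X) : 0 ≤ radNorm m x :=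
  Real.rpow_nonneg (intervalIntegral.integral_nonneg (by norm_num)
    (fun t _ => by positivity)) _

lemma sum_pairing_le (m : ℕ) (ψ : ℕ → X →L[ℝ] ℝ) (z : ℕ → X) :
    ∑ i ∈ Finset.range m, ψ i (z i) ≤ radNorm m ψ * radNorm m z := by
  set F := fun t => ‖∑ i ∈ Finset.range m, rademacher i t • ψ i‖ with hF
  set G := fun t => ‖∑ j ∈ Finset.range m, rademacher j t • z j‖ with hG
  set Bf := ∑ i ∈ Finset.range m, ‖ψ i‖ with hBf
  set Bg := ∑ i ∈ Finset.range m, ‖z i‖ with hBg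
  have hFb : ∀ t, F t ≤ Bf := fun t => norm_rad_sum_le m ψ t
  have hGb : ∀ t, G t ≤ Bg := fun t => norm_rad_sum_le m z t
  have hFm : Measurable F := measurable_norm_rad_sum m ψ
  have hGm : Measurable G := measurable_norm_rad_sum m z
  have hmpair : Measurable (fun t => (∑ i ∈ Finset.range m, rademacher i t • ψ i)
      (∑ j ∈ Finset.range m, rademacher j t • z j)) := by
    have hc : Continuous fun a : ℕ → ℝ =>
        (∑ i ∈ Finset.range m, a i • ψ i) (∑ j ∈ Finset.range m, a j • z j) :=
      (continuous_finset_sum _ fun i _ => (continuous_apply i).smul continuous_const).clm_apply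
        (continuous_finset_sum _ fun j _ => (continuous_apply j).smul continuous_const)
    exact hc.measurable.comp (measurable_pi_lambda _ fun i => measurable_rademacher i)
  have hpair_le : ∀ t, |(∑ i ∈ Finset.range m, rademacher i t • ψ i)
      (∑ j ∈ Finset.range m, rademacher j t • z j)| ≤ F t * G t := fun t => by
    rw [← Real.norm_eq_abs]
    exact ContinuousLinearMap.le_opNorm _ _
  have hpair_int : IntervalIntegrable (fun t => (∑ i ∈ Finset.range m, rademacher i t • ψ i)
      (∑ j ∈ Finset.range m, rademacher j t • z j)) volume 0 1 := by
    apply intervalIntegrable_of_bounded (B := Bf * Bg) hmpair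
    intro t
    exact le_trans (hpair_le t) (mul_le_mul (hFb t) (hGb t) (norm_nonneg _)
      (le_trans (norm_nonneg _) (hFb t)))
  have hFG_int : IntervalIntegrable (fun t => F t * G t) volume 0 1 := by
    apply intervalIntegrable_of_bounded (B := Bf * Bg) (hFm.mul hGm)
    intro t
    rw [Pi.mul_apply, abs_mul, abs_of_nonneg (norm_nonneg _), abs_of_nonneg (norm_nonneg _)]
    exact mul_le_mul (hFb t) (hGb t) (norm_nonneg _) (le_trans (norm_nonneg _) (hFb t))
  rw [← pairing_integral m ψ z]
  have step1 : (∫ t in (0:ℝ)..1, (∑ i ∈ Finset.range m, rademacher i t • ψ i)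
      (∑ j ∈ Finset.range m, rademacher j t • z j)) ≤ ∫ t in (0:ℝ)..1, F t * G t := by
    apply intervalIntegral.integral_mono_on (by norm_num) hpair_int hFG_int
    intro t _
    exact le_trans (le_abs_self _) (hpair_le t)
  refine le_trans step1 ?_
  -- Cauchy–Schwarz
  set μ := volume.restrict (Set.Ioc (0:ℝ) 1) with hμ
  haveI : IsFiniteMeasure μ := by
    constructor
    rw [hμ, Measure.restrict_apply_univ]
    simp [Real.volume_Ioc]
  have hpq : Real.HolderConjugate 2 2 := Real.HolderConjugate.two_two
  have hFmem : MemLp F (ENNReal.ofReal 2) μ :=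
    MemLp.of_bound hFm.aestronglyMeasurable Bf (ae_of_all _ fun t => by
      rw [Real.norm_eq_abs, abs_of_nonneg (norm_nonneg _)]; exact hFb t)
  have hGmem : MemLp G (ENNReal.ofReal 2) μ :=
    MemLp.of_bound hGm.aestronglyMeasurable Bg (ae_of_all _ fun t => by
      rw [Real.norm_eq_abs, abs_of_nonneg (norm_nonneg _)]; exact hGb t)
  have hCS := MeasureTheory.integral_mul_le_Lp_mul_Lq_of_nonneg hpq
    (ae_of_all _ fun t => norm_nonneg _) (ae_of_all _ fun t => norm_nonneg _) hFmem hGmem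
  have hio : ∀ h : ℝ → ℝ, (∫ t in (0:ℝ)..1, h t) = ∫ t, h t ∂μ := fun h =>
    intervalIntegral.integral_of_le (by norm_num)
  rw [hio]
  unfold radNorm
  rw [hio, hio]
  have h2 : ∀ s : ℝ, 0 ≤ s → s ^ (2:ℝ) = s ^ (2:ℕ) := fun s hs => by
    rw [← Real.rpow_natCast s 2]; norm_num
  calc ∫ t, F t * G t ∂μ ≤ (∫ t, F t ^ (2:ℝ) ∂μ) ^ ((1:ℝ)/2) * (∫ t, G t ^ (2:ℝ) ∂μ) ^ ((1:ℝ)/2) := hCS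
    _ = (∫ t, F t ^ (2:ℕ) ∂μ) ^ ((1:ℝ)/2) * (∫ t, G t ^ (2:ℕ) ∂μ) ^ ((1:ℝ)/2) := by
        congr 1 <;> · congr 1; apply integral_congr_ae; exact ae_of_all _ fun t => h2 _ (norm_nonneg _)


lemma weakNorm_nonneg {Z : Type u} [NormedAddCommGroup Z] [NormedSpace ℝ Z] (q : ℝ≥0∞)
    (m : ℕ) (x : ℕ → Z) : 0 ≤ weakNorm q m x := by
  unfold weakNorm
  split
  · exact Real.iSup_nonneg fun i => norm_nonneg _
  · exact Real.iSup_nonneg fun φ => Real.rpow_nonneg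
      (Finset.sum_nonneg fun i _ => Real.rpow_nonneg (abs_nonneg _) _) _

lemma lpNormFin_congr {Z : Type u} {W : Type v} [NormedAddCommGroup Z] [NormedAddCommGroup W]
    (q : ℝ≥0∞) (m : ℕ) {x : ℕ → Z} {y : ℕ → W} (h : ∀ i, ‖x i‖ = ‖y i‖) :
    lpNormFin q m x = lpNormFin q m y := by
  unfold lpNormFin
  split
  · exact iSup_congr fun i => h i
  · congr 1
    exact Finset.sum_congr rfl fun i _ => by rw [h i]


/-- If `X` has type `p` (`1 ≤ p ≤ 2`) and `u*` is almost `p*`-summing,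
then `u` is Cohen strongly `p`-summing. -/
theorem stmt2 {X : Type u} {Y : Type v} [NormedAddCommGroup X] [NormedSpace ℝ X]
    [CompleteSpace X] [NormedAddCommGroup Y] [NormedSpace ℝ Y] [CompleteSpace Y]
    (p : ℝ≥0∞) (hp1 : 1 ≤ p) (hp2 : p ≤ 2) (hX : HasTypeP p X) (u : X →L[ℝ] Y)
    (hu : IsAlmostPSumming (conjExp p) (adj u)) :
    IsCohenStrong p u := by
  obtain ⟨Cx, hCx0, hCx⟩ := hX
  obtain ⟨Cu, hCu0, hCu⟩ := hu
  refine ⟨Cu * Cx, mul_nonneg hCu0 hCx0, ?_⟩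
  intro m x φ
  set ε : ℕ → ℝ := fun i => if 0 ≤ φ i (u (x i)) then 1 else -1 with hε
  set z : ℕ → X := fun i => ε i • x i with hz
  have habs : ∀ i, |φ i (u (x i))| = (adj u (φ i)) (z i) := by
    intro i
    have h1 : (adj u (φ i)) (z i) = ε i * φ i (u (x i)) := by
      show (φ i) (u (ε i • x i)) = _
      rw [_root_.map_smul, _root_.map_smul, smul_eq_mul]
    rw [h1, hε]
    dsimp only
    split
    · rename_i h; rw [abs_of_nonneg h, one_mul]
    · rename_i h; push_neg at h; rw [abs_of_neg h, neg_one_mul]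
  have hnorm : ∀ i, ‖z i‖ = ‖x i‖ := by
    intro i
    rw [hz]
    dsimp only
    rw [norm_smul, Real.norm_eq_abs, hε]
    dsimp only
    split <;> simp
  calc ∑ i ∈ Finset.range m, |φ i (u (x i))|
      = ∑ i ∈ Finset.range m, (adj u (φ i)) (z i) :=
        Finset.sum_congr rfl fun i _ => habs i
    _ ≤ radNorm m (fun i => adj u (φ i)) * radNorm m z := sum_pairing_le m _ z
    _ ≤ (Cu * weakNorm (conjExp p) m φ) * (Cx * lpNormFin p m z) := by
        apply mul_le_mul (hCu m φ) (hCx m z) (radNorm_nonneg m z)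
        exact mul_nonneg hCu0 (weakNorm_nonneg _ _ _)
    _ = Cu * Cx * lpNormFin p m x * weakNorm (conjExp p) m φ := by
        rw [lpNormFin_congr p m hnorm]
        ring


end
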